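/- Sign property of p-th order ENO interpolation: given point values v_i = v(x_i) on a strictly increasing grid, let the ENO interpolant select for each point x_i a stencil of p consecutive points containing x_i by the divided-difference rule (extend left if the left (j)-th divided difference is strictly smaller in absolute value, else right), and let f_i be the degree-(p−1) interpolating polynomial. Define v⁻_{i+1/2} = f_i(x_{i+1/2}) and v⁺_{i+1/2} = f_{i+1}(x_{i+1/2}) where x_{i+1/2} = (x_i + x_{i+1})/2. Then (v⁺_{i+1/2} − v⁻_{i+1/2}) has the same sign (weakly) as v_{i+1} − v_i; in particular v_{i+1} = v_i implies v⁺_{i+1/2} = v⁻_{i+1/2}. -/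

import Mathlib

/-- Divided differences of the data `V` at the points `x`:
`dd x V j i = V[x_i, ..., x_{i+j}]`. -/
noncomputable def dd (x V : ℤ → ℝ) : ℕ → ℤ → ℝ
  | 0, i => V i
  | j + 1, i => (dd x V j (i + 1) - dd x V j i) / (x (i + (j : ℤ) + 1) - x i)

/-- ENO interpolation stencil offsets for the grid point `x_i`:
`enoOffsetI x v i j` is the left offset `r_j` of the `j`-point stencil
`{x_{i+r_j}, ..., x_{i+r_j+j-1}}` chosen by the ENO selection procedure applied to
point values `v` at points `x`. -/
noncomputable def enoOffsetI (x v : ℤ → ℝ) (i : ℤ) : ℕ → ℤ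
  | 0 => 0
  | 1 => 0
  | j + 2 =>
    let r := enoOffsetI x v i (j + 1)
    if |dd x v (j + 1) (i + r - 1)| < |dd x v (j + 1) (i + r)| then r - 1 else r

open Polynomial Finset Lagrange


namespace EnoSign

variable {x v : ℤ → ℝ}

lemma card_Icc_int (a : ℤ) (n : ℕ) : (Finset.Icc a (a + n)).card = n + 1 := by
  rw [Int.card_Icc]; omega

lemma injOn_x (hx : StrictMono x) (s : Set ℤ) : Set.InjOn x s :=
  hx.injective.injOn

lemma degree_lin_mul_lt {P : ℝ[X]} {d : ℝ} {n : ℕ} (h : P.degree < (n : ℕ)) :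
    ((X - C d) * P).degree < ((n + 1 : ℕ) : WithBot ℕ) := by
  rcases eq_or_ne P 0 with rfl | hP
  · rw [mul_zero, degree_zero]; exact WithBot.bot_lt_coe _
  · rw [degree_mul, degree_X_sub_C]
    have : P.degree = (P.natDegree : WithBot ℕ) := degree_eq_natDegree hP
    rw [this] at h ⊢
    have hn : P.natDegree < n := by exact_mod_cast h
    have : (1 : WithBot ℕ) + (P.natDegree : WithBot ℕ) = ((1 + P.natDegree : ℕ) : WithBot ℕ) := by
      push_cast; ring
    rw [this]
    exact_mod_cast by omega
 
/-- Neville recursion for the interpolating polynomial. -/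
lemma neville (hx : StrictMono x) (n : ℕ) (a : ℤ) :
    interpolate (Finset.Icc a (a + (n + 1 : ℕ))) x v =
      C ((x (a + n + 1) - x a)⁻¹) *
        ((X - C (x a)) * interpolate (Finset.Icc (a + 1) (a + 1 + (n : ℕ))) x v -
         (X - C (x (a + n + 1))) * interpolate (Finset.Icc a (a + (n : ℕ))) x v) := by
  have hden : x (a + n + 1) - x a ≠ 0 := by
    have := hx (show a < a + n + 1 by omega); linarith
  symm
  apply eq_interpolate_of_eval_eq _ (injOn_x hx _)
  · -- degree < card
    rw [card_Icc_int a (n + 1)]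
    have h1 : (interpolate (Finset.Icc (a + 1) (a + 1 + (n : ℕ))) x v).degree
        < ((n + 1 : ℕ) : WithBot ℕ) := by
      have := degree_interpolate_lt (s := Finset.Icc (a + 1) (a + 1 + (n : ℕ))) (v := x)
        (r := v) (injOn_x hx _)
      rwa [card_Icc_int (a + 1) n] at this
    have h2 : (interpolate (Finset.Icc a (a + (n : ℕ))) x v).degree
        < ((n + 1 : ℕ) : WithBot ℕ) := by
      have := degree_interpolate_lt (s := Finset.Icc a (a + (n : ℕ))) (v := x)
        (r := v) (injOn_x hx _)
      rwa [card_Icc_int a n] at this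
    set Q := (X - C (x a)) * interpolate (Finset.Icc (a + 1) (a + 1 + (n : ℕ))) x v -
         (X - C (x (a + n + 1))) * interpolate (Finset.Icc a (a + (n : ℕ))) x v with hQ
    calc (C ((x (a + n + 1) - x a)⁻¹) * Q).degree
        ≤ (C ((x (a + n + 1) - x a)⁻¹)).degree + Q.degree := degree_mul_le _ _
      _ ≤ 0 + Q.degree := add_le_add_left degree_C_le _
      _ = Q.degree := zero_add _
      _ < ((n + 1 + 1 : ℕ) : WithBot ℕ) := lt_of_le_of_lt (degree_sub_le _ _)
          (max_lt (degree_lin_mul_lt h1) (degree_lin_mul_lt h2))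
  · intro k hk
    simp only [Finset.mem_Icc] at hk
    rcases eq_or_ne k a with rfl | hka
    · have hk2 : k ∈ Finset.Icc k (k + (n : ℕ)) := by simp [Finset.mem_Icc]
      simp only [eval_mul, eval_C, eval_sub, eval_X,
        eval_interpolate_at_node v (injOn_x hx _) hk2]
      field_simp
      ring
    · rcases eq_or_ne k (a + n + 1) with rfl | hkb
      · have hk1 : a + (n:ℤ) + 1 ∈ Finset.Icc (a + 1) (a + 1 + (n : ℕ)) := by
          simp [Finset.mem_Icc]
        simp only [eval_mul, eval_C, eval_sub, eval_X,
          eval_interpolate_at_node v (injOn_x hx _) hk1]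
        field_simp
        ring
      · have hk1 : k ∈ Finset.Icc (a + 1) (a + 1 + (n : ℕ)) := by
          simp only [Finset.mem_Icc]; push_cast at hk ⊢; omega
        have hk2 : k ∈ Finset.Icc a (a + (n : ℕ)) := by
          simp only [Finset.mem_Icc]; push_cast at hk ⊢; omega
        simp only [eval_mul, eval_C, eval_sub, eval_X,
          eval_interpolate_at_node v (injOn_x hx _) hk1,
          eval_interpolate_at_node v (injOn_x hx _) hk2]
        field_simp
        ring

end EnoSign

namespace EnoSign

variable {x v : ℤ → ℝ}

lemma coeff_zero_top (hx : StrictMono x) (n : ℕ) (a : ℤ) :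
    (interpolate (Finset.Icc a (a + (n : ℕ))) x v).coeff (n + 1) = 0 := by
  apply coeff_eq_zero_of_degree_lt
  have h := degree_interpolate_lt (s := Finset.Icc a (a + (n : ℕ))) (v := x) (r := v)
    (injOn_x hx _)
  rw [card_Icc_int a n] at h
  exact_mod_cast h

lemma coeff_interpolate (hx : StrictMono x) : ∀ (n : ℕ) (a : ℤ),
    (interpolate (Finset.Icc a (a + (n : ℕ))) x v).coeff n = dd x v n a
  | 0, a => by
    have h : Finset.Icc a (a + ((0:ℕ):ℤ)) = {a} := by norm_num
    rw [h, interpolate_singleton]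
    simp [dd]
  | (n+1), a => by
    have hden : x (a + n + 1) - x a ≠ 0 := by
      have := hx (show a < a + n + 1 by omega); linarith
    rw [neville hx n a, coeff_C_mul, coeff_sub,
      mul_comm (X - C (x a)), mul_comm (X - C (x (a + n + 1))),
      coeff_mul_X_sub_C, coeff_mul_X_sub_C,
      coeff_interpolate hx n (a + 1), coeff_interpolate hx n a,
      coeff_zero_top hx n (a + 1), coeff_zero_top hx n a]
    have hdd : dd x v (n + 1) a = (dd x v n (a + 1) - dd x v n a) / (x (a + n + 1) - x a) := rfl
    rw [hdd]
    field_simp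
    ring

end EnoSign

namespace EnoSign

variable {x v : ℤ → ℝ}

/-- The fundamental "shift by one stencil" formula. -/
lemma shift (hx : StrictMono x) (n : ℕ) (a : ℤ) :
    interpolate (Finset.Icc (a + 1) (a + 1 + (n : ℕ))) x v
      - interpolate (Finset.Icc a (a + (n : ℕ))) x v =
    C (dd x v (n + 1) a * (x (a + n + 1) - x a)) * nodal (Finset.Icc (a + 1) (a + (n : ℤ))) x := by
  have hden : x (a + n + 1) - x a ≠ 0 := by
    have := hx (show a < a + n + 1 by omega); linarith
  set P1 := interpolate (Finset.Icc (a + 1) (a + 1 + (n : ℕ))) x v with hP1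
  set P2 := interpolate (Finset.Icc a (a + (n : ℕ))) x v with hP2
  set s : Finset ℤ := Finset.Icc (a + 1) (a + (n : ℤ)) with hs
  have hcard : s.card = n := by rw [hs, Int.card_Icc]; omega
  have hnodal_deg : (nodal s x).degree = (n : WithBot ℕ) := by
    rw [Lagrange.degree_nodal, hcard]
  have hnodal_coeff : (nodal s x).coeff n = 1 := by
    have := Lagrange.nodal_monic (s := s) (v := x)
    have hnat : (nodal s x).natDegree = n := by rw [Lagrange.natDegree_nodal, hcard]
    rw [← hnat]; exact this
  have hD1 : P1.degree < ((n + 1 : ℕ) : WithBot ℕ) := by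
    have h := degree_interpolate_lt (s := Finset.Icc (a + 1) (a + 1 + (n : ℕ))) (v := x)
      (r := v) (injOn_x hx _)
    rwa [card_Icc_int (a + 1) n] at h
  have hD2 : P2.degree < ((n + 1 : ℕ) : WithBot ℕ) := by
    have h := degree_interpolate_lt (s := Finset.Icc a (a + (n : ℕ))) (v := x)
      (r := v) (injOn_x hx _)
    rwa [card_Icc_int a n] at h
  have hcoef : (P1 - P2).coeff n = dd x v (n + 1) a * (x (a + n + 1) - x a) := by
    rw [coeff_sub, hP1, hP2, coeff_interpolate hx n (a + 1), coeff_interpolate hx n a]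
    have hdd : dd x v (n + 1) a = (dd x v n (a + 1) - dd x v n a) / (x (a + n + 1) - x a) := rfl
    rw [hdd]
    field_simp
  have hE : P1 - P2 - C ((P1 - P2).coeff n) * nodal s x = 0 := by
    apply eq_zero_of_degree_lt_of_eval_index_eq_zero s (injOn_x hx _)
    · rw [hcard, degree_lt_iff_coeff_zero]
      intro m hm
      have hm' : (n : ℕ) ≤ m := by exact_mod_cast hm
      rw [coeff_sub, coeff_sub, coeff_C_mul]
      rcases eq_or_lt_of_le hm' with rfl | hmlt
      · rw [hnodal_coeff, mul_one, coeff_sub]; ring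
      · have h1 : P1.coeff m = 0 := coeff_eq_zero_of_degree_lt
          (lt_of_lt_of_le hD1 (by exact_mod_cast hmlt))
        have h2 : P2.coeff m = 0 := coeff_eq_zero_of_degree_lt
          (lt_of_lt_of_le hD2 (by exact_mod_cast hmlt))
        have h3 : (nodal s x).coeff m = 0 := coeff_eq_zero_of_degree_lt
          (by rw [hnodal_deg]; exact_mod_cast hmlt)
        rw [h1, h2, h3]; ring
    · intro k hk
      rw [hs, Finset.mem_Icc] at hk
      have hk1 : k ∈ Finset.Icc (a + 1) (a + 1 + (n : ℕ)) := by
        rw [Finset.mem_Icc]; omega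
      have hk2 : k ∈ Finset.Icc a (a + (n : ℕ)) := by
        rw [Finset.mem_Icc]; omega
      have hkn : k ∈ s := by rw [hs, Finset.mem_Icc]; omega
      simp only [hP1, hP2, eval_sub, eval_mul, eval_C,
        eval_interpolate_at_node v (injOn_x hx _) hk1,
        eval_interpolate_at_node v (injOn_x hx _) hk2,
        Lagrange.eval_nodal_at_node hkn]
      ring
  have := sub_eq_zero.mp hE
  rw [← hcoef, ← this]

end EnoSign


namespace EnoSign

variable {x v : ℤ → ℝ}

noncomputable def eps (t : ℤ) : ℝ := (-1 : ℝ) ^ t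

lemma eps_add_one (t : ℤ) : eps (t + 1) = -eps t := by
  rw [eps, eps, zpow_add_one₀ (by norm_num : (-1:ℝ) ≠ 0)]; ring

lemma abs_eps (t : ℤ) : |eps t| = 1 := by
  rw [eps]
  rcases Int.even_or_odd t with h | h
  · rw [h.neg_one_zpow]; norm_num
  · rw [Odd.neg_one_zpow h]; norm_num

lemma eps_mul_self (t : ℤ) : eps t * eps t = 1 := by
  have h := abs_eps t
  rcases abs_eq (by norm_num : (0:ℝ) ≤ 1) |>.mp h with h1 | h1 <;> rw [h1] <;> norm_num

/-- signed divided difference relative to the interface `i+1/2`. -/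
noncomputable def sig (x v : ℤ → ℝ) (i : ℤ) (j : ℕ) (a : ℤ) : ℝ :=
  eps (a + j - 1 - i) * dd x v j a

lemma abs_sig (i : ℤ) (j : ℕ) (a : ℤ) : |sig x v i j a| = |dd x v j a| := by
  rw [sig, abs_mul, abs_eps, one_mul]

lemma sig_rec (i : ℤ) (j : ℕ) (a : ℤ) :
    sig x v i (j + 1) a = (sig x v i j (a + 1) + sig x v i j a) / (x (a + j + 1) - x a) := by
  have hdd : dd x v (j + 1) a = (dd x v j (a + 1) - dd x v j a) / (x (a + (j:ℤ) + 1) - x a) := rfl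
  rw [sig, hdd]
  have key : eps (a + (↑(j+1):ℤ) - 1 - i) *
      ((dd x v j (a + 1) - dd x v j a) / (x (a + (j:ℤ) + 1) - x a)) =
      (eps (a + (↑(j+1):ℤ) - 1 - i) * dd x v j (a + 1) -
       eps (a + (↑(j+1):ℤ) - 1 - i) * dd x v j a) / (x (a + (j:ℤ) + 1) - x a) := by
    ring
  have h1 : (a + (↑(j+1):ℤ) - 1 - i) = (a + 1 + j - 1 - i) := by push_cast; ring
  have h2 : (a + (↑(j+1):ℤ) - 1 - i) = (a + j - 1 - i) + 1 := by push_cast; ring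
  have e1 : eps (a + (↑(j+1):ℤ) - 1 - i) * dd x v j (a + 1) = sig x v i j (a + 1) := by
    rw [sig, h1]
  have e2 : eps (a + (↑(j+1):ℤ) - 1 - i) * dd x v j a = - sig x v i j a := by
    rw [sig, h2, eps_add_one]; ring
  rw [key, e1, e2]
  ring_nf

lemma eno_succ (c : ℤ) (j : ℕ) (hj : 1 ≤ j) :
    enoOffsetI x v c (j + 1) =
      if |dd x v j (c + enoOffsetI x v c j - 1)| < |dd x v j (c + enoOffsetI x v c j)| then
        enoOffsetI x v c j - 1
      else enoOffsetI x v c j := by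
  obtain ⟨k, rfl⟩ := Nat.exists_eq_add_of_le hj
  simp only [show 1 + k + 1 = k + 2 from by omega, show 1 + k = k + 1 from by omega]
  rfl

lemma eno_bounds (c : ℤ) : ∀ j : ℕ, 1 ≤ j →
    1 - (j : ℤ) ≤ enoOffsetI x v c j ∧ enoOffsetI x v c j ≤ 0 := by
  intro j hj
  induction j, hj using Nat.le_induction with
  | base => simp [enoOffsetI]
  | succ j hj ih =>
    rw [eno_succ c j hj]
    split_ifs with h <;> push_cast <;> omega

lemma add_nonneg_of_abs_lt {s t : ℝ} (ht : 0 ≤ t) (h : |s| < |t|) : 0 ≤ s + t := by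
  have h1 := neg_abs_le s
  rw [abs_of_nonneg ht] at h
  linarith

lemma add_nonneg_of_abs_le {s t : ℝ} (ht : 0 ≤ t) (h : |s| ≤ |t|) : 0 ≤ s + t := by
  have h1 := neg_abs_le s
  rw [abs_of_nonneg ht] at h
  linarith

lemma add_nonpos_of_abs_lt {s t : ℝ} (ht : t ≤ 0) (h : |s| < |t|) : s + t ≤ 0 := by
  have h1 := le_abs_self s
  rw [abs_of_nonpos ht] at h
  linarith

lemma add_nonpos_of_abs_le {s t : ℝ} (ht : t ≤ 0) (h : |s| ≤ |t|) : s + t ≤ 0 := by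
  have h1 := le_abs_self s
  rw [abs_of_nonpos ht] at h
  linarith

/-- The key ENO sign-control induction. -/
lemma claim (hx : StrictMono x) (i : ℤ) (hΔ : 0 ≤ v (i + 1) - v i) :
    ∀ j : ℕ, 1 ≤ j →
      (∀ a : ℤ, i + enoOffsetI x v i j ≤ a → a + 1 ≤ i + 1 + enoOffsetI x v (i + 1) j →
        0 ≤ sig x v i j a) ∧
      (∀ a : ℤ, i + 1 + enoOffsetI x v (i + 1) j ≤ a → a + 1 ≤ i + enoOffsetI x v i j →
        sig x v i j a ≤ 0) := by
  intro j hj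
  induction j, hj using Nat.le_induction with
  | base =>
    constructor
    · intro a ha1 ha2
      simp only [enoOffsetI, add_zero] at ha1 ha2
      have haa : a = i := by omega
      subst haa
      rw [sig]
      have he : (a + ((1:ℕ):ℤ) - 1 - a) = 0 := by push_cast; ring
      rw [he]
      have hdd : dd x v 1 a = (v (a + 1) - v a) / (x (a + (0:ℤ) + 1) - x a) := rfl
      rw [hdd, eps, zpow_zero, one_mul]
      apply div_nonneg hΔ
      have := hx (show a < a + (0:ℤ) + 1 by omega)
      linarith
    · intro a ha1 ha2
      simp only [enoOffsetI, add_zero] at ha1 ha2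
      omega
  | succ j hj ih =>
    have hA := eno_succ (x := x) (v := v) i j hj
    have hB := eno_succ (x := x) (v := v) (i + 1) j hj
    set rA := enoOffsetI x v i j with hrA
    set rB := enoOffsetI x v (i + 1) j with hrB
    have hAalt : (enoOffsetI x v i (j + 1) = rA - 1 ∧
          |dd x v j (i + rA - 1)| < |dd x v j (i + rA)|) ∨
        (enoOffsetI x v i (j + 1) = rA ∧ |dd x v j (i + rA)| ≤ |dd x v j (i + rA - 1)|) := by
      by_cases h : |dd x v j (i + rA - 1)| < |dd x v j (i + rA)|
      · exact Or.inl ⟨by rw [hA, if_pos h], h⟩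
      · exact Or.inr ⟨by rw [hA, if_neg h], not_lt.mp h⟩
    have hBalt : (enoOffsetI x v (i + 1) (j + 1) = rB - 1 ∧
          |dd x v j (i + 1 + rB - 1)| < |dd x v j (i + 1 + rB)|) ∨
        (enoOffsetI x v (i + 1) (j + 1) = rB ∧
          |dd x v j (i + 1 + rB)| ≤ |dd x v j (i + 1 + rB - 1)|) := by
      by_cases h : |dd x v j (i + 1 + rB - 1)| < |dd x v j (i + 1 + rB)|
      · exact Or.inl ⟨by rw [hB, if_pos h], h⟩
      · exact Or.inr ⟨by rw [hB, if_neg h], not_lt.mp h⟩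
    have hden : ∀ a : ℤ, (0:ℝ) ≤ x (a + j + 1) - x a := by
      intro a
      have := hx (show a < a + j + 1 by omega)
      linarith
    constructor
    · intro a ha1 ha2
      rw [sig_rec]
      apply div_nonneg _ (hden a)
      have hle1 : i + rA - 1 ≤ a := by rcases hAalt with ⟨h, _⟩ | ⟨h, _⟩ <;> omega
      have hle2 : a + 1 ≤ i + 1 + rB := by rcases hBalt with ⟨h, _⟩ | ⟨h, _⟩ <;> omega
      rcases eq_or_lt_of_le hle1 with hcaseA | hcaseA
      · -- a = i + rA - 1 : the ENO choice at i must have been "left"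
        have hAchose : |dd x v j (i + rA - 1)| < |dd x v j (i + rA)| := by
          rcases hAalt with ⟨h, hc⟩ | ⟨h, _⟩
          · exact hc
          · omega
        rw [show i + rA - 1 = a from hcaseA] at hAchose
        rw [show i + rA = a + 1 from by omega] at hAchose
        rcases eq_or_lt_of_le hle2 with hcaseB | hcaseB
        · -- simultaneously right boundary: contradiction
          have hBchose : |dd x v j (i + 1 + rB)| ≤ |dd x v j (i + 1 + rB - 1)| := by
            rcases hBalt with ⟨h, _⟩ | ⟨h, hc⟩
            · omega
            · exact hc
          rw [show i + 1 + rB - 1 = a from by omega] at hBchose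
          rw [show i + 1 + rB = a + 1 from hcaseB.symm] at hBchose
          linarith
        · have hpos : 0 ≤ sig x v i j (a + 1) := (ih.1) (a + 1) (by omega) (by omega)
          have habs : |sig x v i j a| < |sig x v i j (a + 1)| := by
            rw [abs_sig, abs_sig]; exact hAchose
          have := add_nonneg_of_abs_lt hpos habs
          linarith
      · have hpos1 : 0 ≤ sig x v i j a := (ih.1) a (by omega) (by omega)
        rcases eq_or_lt_of_le hle2 with hcaseB | hcaseB
        · -- a + 1 = i + 1 + rB : the ENO choice at i+1 kept the stencil
          have hBchose : |dd x v j (i + 1 + rB)| ≤ |dd x v j (i + 1 + rB - 1)| := by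
            rcases hBalt with ⟨h, _⟩ | ⟨h, hc⟩
            · omega
            · exact hc
          rw [show i + 1 + rB - 1 = a from by omega] at hBchose
          rw [show i + 1 + rB = a + 1 from hcaseB.symm] at hBchose
          have habs : |sig x v i j (a + 1)| ≤ |sig x v i j a| := by
            rw [abs_sig, abs_sig]; exact hBchose
          have := add_nonneg_of_abs_le hpos1 habs
          linarith
        · have hpos2 : 0 ≤ sig x v i j (a + 1) := (ih.1) (a + 1) (by omega) (by omega)
          linarith
    · intro a ha1 ha2
      rw [sig_rec]
      apply div_nonpos_of_nonpos_of_nonneg _ (hden a)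
      have hle1 : i + 1 + rB - 1 ≤ a := by rcases hBalt with ⟨h, _⟩ | ⟨h, _⟩ <;> omega
      have hle2 : a + 1 ≤ i + rA := by rcases hAalt with ⟨h, _⟩ | ⟨h, _⟩ <;> omega
      rcases eq_or_lt_of_le hle1 with hcaseB | hcaseB
      · -- a = i + 1 + rB - 1 : the ENO choice at i+1 must have been "left"
        have hBchose : |dd x v j (i + 1 + rB - 1)| < |dd x v j (i + 1 + rB)| := by
          rcases hBalt with ⟨h, hc⟩ | ⟨h, _⟩
          · exact hc
          · omega
        rw [show i + 1 + rB - 1 = a from hcaseB] at hBchose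
        rw [show i + 1 + rB = a + 1 from by omega] at hBchose
        rcases eq_or_lt_of_le hle2 with hcaseA | hcaseA
        · -- simultaneously boundary on the A side: contradiction
          have hAchose : |dd x v j (i + rA)| ≤ |dd x v j (i + rA - 1)| := by
            rcases hAalt with ⟨h, _⟩ | ⟨h, hc⟩
            · omega
            · exact hc
          rw [show i + rA - 1 = a from by omega] at hAchose
          rw [show i + rA = a + 1 from hcaseA.symm] at hAchose
          linarith
        · have hneg : sig x v i j (a + 1) ≤ 0 := (ih.2) (a + 1) (by omega) (by omega)
          have habs : |sig x v i j a| < |sig x v i j (a + 1)| := by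
            rw [abs_sig, abs_sig]; exact hBchose
          have := add_nonpos_of_abs_lt hneg habs
          linarith
      · have hneg1 : sig x v i j a ≤ 0 := (ih.2) a (by omega) (by omega)
        rcases eq_or_lt_of_le hle2 with hcaseA | hcaseA
        · have hAchose : |dd x v j (i + rA)| ≤ |dd x v j (i + rA - 1)| := by
            rcases hAalt with ⟨h, _⟩ | ⟨h, hc⟩
            · omega
            · exact hc
          rw [show i + rA - 1 = a from by omega] at hAchose
          rw [show i + rA = a + 1 from hcaseA.symm] at hAchose
          have habs : |sig x v i j (a + 1)| ≤ |sig x v i j a| := by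
            rw [abs_sig, abs_sig]; exact hAchose
          have := add_nonpos_of_abs_le hneg1 habs
          linarith
        · have hneg2 : sig x v i j (a + 1) ≤ 0 := (ih.2) (a + 1) (by omega) (by omega)
          linarith

end EnoSign

namespace EnoSign

variable {x v : ℤ → ℝ}

lemma chain_up (F : ℤ → ℝ) (a : ℤ) :
    ∀ n : ℕ, (∀ k, a ≤ k → k + 1 ≤ a + n → F k ≤ F (k + 1)) → F a ≤ F (a + n)
  | 0, _ => by simp
  | (n + 1), h => by
    have h1 : F a ≤ F (a + n) :=
      chain_up F a n (fun k hk1 hk2 => h k hk1 (by push_cast at hk2 ⊢; omega))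
    have h2 : F (a + n) ≤ F (a + n + 1) := h (a + n) (by omega) (by push_cast; omega)
    have he : a + ((n : ℤ) + 1) = a + n + 1 := by push_cast; ring
    rw [show ((n + 1 : ℕ) : ℤ) = (n : ℤ) + 1 from by push_cast; ring, ← add_assoc]
    exact le_trans h1 h2

lemma chain_down (F : ℤ → ℝ) (a : ℤ) :
    ∀ n : ℕ, (∀ k, a ≤ k → k + 1 ≤ a + n → F (k + 1) ≤ F k) → F (a + n) ≤ F a
  | 0, _ => by simp
  | (n + 1), h => by
    have h1 : F (a + n) ≤ F a :=
      chain_down F a n (fun k hk1 hk2 => h k hk1 (by push_cast at hk2 ⊢; omega))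
    have h2 : F (a + n + 1) ≤ F (a + n) := h (a + n) (by omega) (by push_cast; omega)
    rw [show ((n + 1 : ℕ) : ℤ) = (n : ℤ) + 1 from by push_cast; ring, ← add_assoc]
    exact le_trans h2 h1

lemma prod_sign (hx : StrictMono x) (i k : ℤ) (n : ℕ) (hk1 : k ≤ i) (hk2 : i ≤ k + n) :
    0 ≤ eps (k + n - i) *
      ∏ t ∈ Finset.Icc (k + 1) (k + (n : ℤ)), ((x i + x (i + 1)) / 2 - x t) := by
  set m : ℝ := (x i + x (i + 1)) / 2 with hm
  have hii : x i < x (i + 1) := hx (by omega)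
  have hm1 : x i < m := by rw [hm]; linarith
  have hm2 : m < x (i + 1) := by rw [hm]; linarith
  have hIoc : Finset.Icc (k + 1) (k + (n : ℤ)) = Finset.Ioc k (k + (n : ℤ)) := by
    ext t; simp only [Finset.mem_Icc, Finset.mem_Ioc]; omega
  have hunion : Finset.Ioc k i ∪ Finset.Ioc i (k + (n : ℤ)) = Finset.Ioc k (k + (n : ℤ)) :=
    Finset.Ioc_union_Ioc_eq_Ioc hk1 hk2
  have hdisj : Disjoint (Finset.Ioc k i) (Finset.Ioc i (k + (n : ℤ))) := by
    rw [Finset.disjoint_left]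
    intro t ht1 ht2
    rw [Finset.mem_Ioc] at ht1 ht2
    omega
  have hsplit : ∏ t ∈ Finset.Ioc k (k + (n : ℤ)), (m - x t) =
      (∏ t ∈ Finset.Ioc k i, (m - x t)) * ∏ t ∈ Finset.Ioc i (k + (n : ℤ)), (m - x t) := by
    rw [← hunion, Finset.prod_union hdisj]
  have hpos1 : 0 ≤ ∏ t ∈ Finset.Ioc k i, (m - x t) := by
    apply Finset.prod_nonneg
    intro t ht
    rw [Finset.mem_Ioc] at ht
    have : x t ≤ x i := hx.monotone ht.2
    linarith
  set N : ℕ := (k + (n : ℤ) - i).toNat with hN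
  have hcard : (Finset.Ioc i (k + (n : ℤ))).card = N := by rw [Int.card_Ioc]
  have hneg : ∏ t ∈ Finset.Ioc i (k + (n : ℤ)), (m - x t) =
      (-1 : ℝ) ^ N * ∏ t ∈ Finset.Ioc i (k + (n : ℤ)), (x t - m) := by
    rw [← hcard, ← Finset.prod_const, ← Finset.prod_mul_distrib]
    apply Finset.prod_congr rfl
    intro t _
    ring
  have hpos2 : 0 ≤ ∏ t ∈ Finset.Ioc i (k + (n : ℤ)), (x t - m) := by
    apply Finset.prod_nonneg
    intro t ht
    rw [Finset.mem_Ioc] at ht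
    have : x (i + 1) ≤ x t := hx.monotone (by omega)
    linarith
  have heps : eps (k + n - i) = (-1 : ℝ) ^ N := by
    rw [eps, ← zpow_natCast]
    congr 1
    omega
  rw [hIoc, hsplit, hneg, heps]
  have hone : (-1 : ℝ) ^ N * (-1 : ℝ) ^ N = 1 := by
    rw [← mul_pow]; norm_num
  calc (0:ℝ) ≤ ((-1 : ℝ) ^ N * (-1 : ℝ) ^ N) *
      ((∏ t ∈ Finset.Ioc k i, (m - x t)) * ∏ t ∈ Finset.Ioc i (k + (n : ℤ)), (x t - m)) := by
        rw [hone, one_mul]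
        exact mul_nonneg hpos1 hpos2
    _ = (-1 : ℝ) ^ N * ((∏ t ∈ Finset.Ioc k i, (m - x t)) *
        ((-1 : ℝ) ^ N * ∏ t ∈ Finset.Ioc i (k + (n : ℤ)), (x t - m))) := by ring

/-- Evaluation of the shift formula at the midpoint, with sign information. -/
lemma step_eval (hx : StrictMono x) (i : ℤ) (n : ℕ) (k : ℤ) (hk1 : k ≤ i) (hk2 : i ≤ k + n) :
    eval ((x i + x (i + 1)) / 2) (interpolate (Finset.Icc (k + 1) (k + 1 + (n : ℤ))) x v) -
      eval ((x i + x (i + 1)) / 2) (interpolate (Finset.Icc k (k + (n : ℤ))) x v) =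
    sig x v i (n + 1) k * ((x (k + n + 1) - x k) *
      (eps (k + n - i) * ∏ t ∈ Finset.Icc (k + 1) (k + (n : ℤ)), ((x i + x (i + 1)) / 2 - x t))) := by
  set m : ℝ := (x i + x (i + 1)) / 2 with hm
  have hshift := shift (v := v) hx n k
  have e := congrArg (eval m) hshift
  rw [eval_sub, eval_mul, eval_C, Lagrange.eval_nodal] at e
  have hdd : dd x v (n + 1) k = eps (k + n - i) * sig x v i (n + 1) k := by
    rw [sig]
    have hexp : k + ((n + 1 : ℕ) : ℤ) - 1 - i = k + n - i := by push_cast; ring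
    rw [hexp, ← mul_assoc, eps_mul_self, one_mul]
  rw [hdd] at e
  rw [e]
  ring

lemma straddle_A (p : ℕ) (hp : 1 ≤ p) (i : ℤ) :
    i - (p : ℤ) + 1 ≤ i + enoOffsetI x v i p ∧ i + enoOffsetI x v i p ≤ i := by
  have := eno_bounds (x := x) (v := v) i p hp
  omega

/-- The main inequality: if the jump is nonnegative, so is `v⁺ - v⁻`. -/
lemma main_half (hx : StrictMono x) (p : ℕ) (hp : 1 ≤ p) (i : ℤ)
    (hΔ : 0 ≤ v (i + 1) - v i) :
    0 ≤ (Lagrange.interpolate (Finset.Icc (i + 1 + enoOffsetI x v (i + 1) p)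
          (i + 1 + enoOffsetI x v (i + 1) p + ((p - 1 : ℕ) : ℤ))) x v).eval
            ((x i + x (i + 1)) / 2) -
        (Lagrange.interpolate (Finset.Icc (i + enoOffsetI x v i p)
          (i + enoOffsetI x v i p + ((p - 1 : ℕ) : ℤ))) x v).eval
            ((x i + x (i + 1)) / 2) := by
  obtain ⟨n, rfl⟩ : ∃ n : ℕ, p = n + 1 := ⟨p - 1, by omega⟩
  rw [show ((n + 1 - 1 : ℕ) : ℤ) = (n : ℤ) from by norm_num]
  set m : ℝ := (x i + x (i + 1)) / 2 with hm
  set F : ℤ → ℝ := fun a => eval m (interpolate (Finset.Icc a (a + (n : ℤ))) x v) with hF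
  set A : ℤ := i + enoOffsetI x v i (n + 1) with hA
  set B : ℤ := i + 1 + enoOffsetI x v (i + 1) (n + 1) with hB
  have hbA := eno_bounds (x := x) (v := v) i (n + 1) (by omega)
  have hbB := eno_bounds (x := x) (v := v) (i + 1) (n + 1) (by omega)
  have hAi : A ≤ i ∧ i - n ≤ A := by push_cast at hbA; omega
  have hBi : B ≤ i + 1 ∧ i + 1 - n ≤ B := by push_cast at hbB; omega
  have hclaim := claim hx i hΔ (n + 1) (by omega)
  have hgoal : 0 ≤ F B - F A → 0 ≤ eval m (interpolate (Finset.Icc B (B + (n : ℤ))) x v) -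
      eval m (interpolate (Finset.Icc A (A + (n : ℤ))) x v) := by
    intro h; exact h
  apply hgoal
  rcases le_or_gt A B with hAB | hAB
  · -- telescope upwards
    have hstep : ∀ k, A ≤ k → k + 1 ≤ B → F k ≤ F (k + 1) := by
      intro k hk1 hk2
      have hsig : 0 ≤ sig x v i (n + 1) k := hclaim.1 k hk1 hk2
      have hk1' : k ≤ i := by omega
      have hk2' : i ≤ k + n := by omega
      have hden : (0:ℝ) ≤ x (k + n + 1) - x k := by
        have := hx (show k < k + n + 1 by omega); linarith
      have hprod := prod_sign hx i k n hk1' hk2'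
      have he := step_eval (v := v) hx i n k hk1' hk2'
      have : 0 ≤ F (k + 1) - F k := by
        rw [hF]
        simp only []
        rw [he]
        exact mul_nonneg hsig (mul_nonneg hden hprod)
      linarith
    obtain ⟨c, hc⟩ : ∃ c : ℕ, B = A + c := ⟨(B - A).toNat, by omega⟩
    rw [hc]
    have := chain_up F A c (fun k h1 h2 => hstep k h1 (by omega))
    linarith
  · -- telescope downwards
    have hstep : ∀ k, B ≤ k → k + 1 ≤ A → F (k + 1) ≤ F k := by
      intro k hk1 hk2
      have hsig : sig x v i (n + 1) k ≤ 0 := hclaim.2 k hk1 hk2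
      have hk1' : k ≤ i := by omega
      have hk2' : i ≤ k + n := by omega
      have hden : (0:ℝ) ≤ x (k + n + 1) - x k := by
        have := hx (show k < k + n + 1 by omega); linarith
      have hprod := prod_sign hx i k n hk1' hk2'
      have he := step_eval (v := v) hx i n k hk1' hk2'
      have : F (k + 1) - F k ≤ 0 := by
        rw [hF]
        simp only []
        rw [he]
        exact mul_nonpos_of_nonpos_of_nonneg hsig (mul_nonneg hden hprod)
      linarith
    obtain ⟨c, hc⟩ : ∃ c : ℕ, A = B + c := ⟨(A - B).toNat, by omega⟩
    rw [hc]
    have := chain_down F B c (fun k h1 h2 => hstep k h1 (by omega))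
    linarith

lemma dd_neg (x v : ℤ → ℝ) : ∀ (j : ℕ) (a : ℤ), dd x (-v) j a = -dd x v j a
  | 0, a => by simp [dd]
  | (j + 1), a => by
    have h1 := dd_neg x v j (a + 1)
    have h2 := dd_neg x v j a
    show (dd x (-v) j (a + 1) - dd x (-v) j a) / (x (a + (j : ℤ) + 1) - x a) = _
    rw [h1, h2]
    have : dd x v (j + 1) a = (dd x v j (a + 1) - dd x v j a) / (x (a + (j : ℤ) + 1) - x a) := rfl
    rw [this]
    ring

lemma eno_neg (x v : ℤ → ℝ) (c : ℤ) : ∀ j : ℕ, enoOffsetI x (-v) c j = enoOffsetI x v c j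
  | 0 => rfl
  | 1 => rfl
  | (j + 2) => by
    have ih := eno_neg x v c (j + 1)
    show (if |dd x (-v) (j + 1) (c + enoOffsetI x (-v) c (j + 1) - 1)| <
            |dd x (-v) (j + 1) (c + enoOffsetI x (-v) c (j + 1))| then
          enoOffsetI x (-v) c (j + 1) - 1 else enoOffsetI x (-v) c (j + 1)) = _
    rw [ih, dd_neg, dd_neg, abs_neg, abs_neg]
    rfl

end EnoSign

/-- the sign property of `p`-th order ENO interpolation.  For each
grid point `x_i` the ENO procedure selects a stencil of `p` consecutive points
containing `x_i`; `f_i` is the corresponding interpolating polynomial of degree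
`≤ p-1`, evaluated at the midpoints `x_{i±1/2}`. -/
theorem eno_interpolation_sign_property (p : ℕ) (hp : 1 ≤ p) (x v : ℤ → ℝ)
    (hx : StrictMono x) (i : ℤ) :
    (v (i + 1) - v i ≥ 0 →
      (Lagrange.interpolate (Finset.Icc (i + 1 + enoOffsetI x v (i + 1) p)
          (i + 1 + enoOffsetI x v (i + 1) p + ((p - 1 : ℕ) : ℤ))) x v).eval
            ((x i + x (i + 1)) / 2) -
      (Lagrange.interpolate (Finset.Icc (i + enoOffsetI x v i p)
          (i + enoOffsetI x v i p + ((p - 1 : ℕ) : ℤ))) x v).eval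
            ((x i + x (i + 1)) / 2) ≥ 0) ∧
    (v (i + 1) - v i ≤ 0 →
      (Lagrange.interpolate (Finset.Icc (i + 1 + enoOffsetI x v (i + 1) p)
          (i + 1 + enoOffsetI x v (i + 1) p + ((p - 1 : ℕ) : ℤ))) x v).eval
            ((x i + x (i + 1)) / 2) -
      (Lagrange.interpolate (Finset.Icc (i + enoOffsetI x v i p)
          (i + enoOffsetI x v i p + ((p - 1 : ℕ) : ℤ))) x v).eval
            ((x i + x (i + 1)) / 2) ≤ 0) ∧
    (v (i + 1) = v i →
      (Lagrange.interpolate (Finset.Icc (i + 1 + enoOffsetI x v (i + 1) p)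
          (i + 1 + enoOffsetI x v (i + 1) p + ((p - 1 : ℕ) : ℤ))) x v).eval
            ((x i + x (i + 1)) / 2) =
      (Lagrange.interpolate (Finset.Icc (i + enoOffsetI x v i p)
          (i + enoOffsetI x v i p + ((p - 1 : ℕ) : ℤ))) x v).eval
            ((x i + x (i + 1)) / 2)) := by
  have hneg : v (i + 1) - v i ≤ 0 →
      (Lagrange.interpolate (Finset.Icc (i + 1 + enoOffsetI x v (i + 1) p)
          (i + 1 + enoOffsetI x v (i + 1) p + ((p - 1 : ℕ) : ℤ))) x v).eval
            ((x i + x (i + 1)) / 2) -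
      (Lagrange.interpolate (Finset.Icc (i + enoOffsetI x v i p)
          (i + enoOffsetI x v i p + ((p - 1 : ℕ) : ℤ))) x v).eval
            ((x i + x (i + 1)) / 2) ≤ 0 := by
    intro h
    have hΔ : 0 ≤ (-v) (i + 1) - (-v) i := by simp; linarith
    have hmain := EnoSign.main_half hx p hp i hΔ
    rw [EnoSign.eno_neg, EnoSign.eno_neg, map_neg, map_neg, eval_neg, eval_neg] at hmain
    linarith
  refine ⟨fun h => EnoSign.main_half hx p hp i h, hneg, fun h => ?_⟩
  have h1 := EnoSign.main_half hx p hp i (by linarith : 0 ≤ v (i + 1) - v i)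
  have h2 := hneg (by linarith)
  linarith
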